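/- Lemma 1 (monotonicity in the history function): Assume the scalar auxiliary setting, that there is h̲ > 0 with H i t ≥ h̲ for all t and all i ≠ 0, and that the scalar auxiliary DDE has at most one solution for each history. If y₁ and y₂ are solutions of the scalar auxiliary DDE with continuous nonnegative histories ψ₁ and ψ₂ respectively, and ψ₁ s ≥ ψ₂ s for all s ∈ [t₀ − h̄, t₀], then y₁ t ≥ y₂ t for all t ≥ t₀. In particular, for constant histories ψ ≡ q, the solution at each time t ≥ t₀ is a monotone nondecreasing function of q. -/

import Mathlib

open Filter Topology

noncomputable section

/-- `y` is a solution of the scalar auxiliary DDE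
`y'(t) = p t * y t + c t * L t (fun i => y (t - H i t)) + g t` with history `ψ`. -/
def IsScalarAuxSol (m : ℕ) (t₀ hb : ℝ) (H : Fin (m + 1) → ℝ → ℝ)
    (p c g : ℝ → ℝ) (L : ℝ → (Fin (m + 1) → ℝ) → ℝ) (ψ y : ℝ → ℝ) : Prop :=
  Continuous y ∧ (∀ t ∈ Set.Icc (t₀ - hb) t₀, y t = ψ t) ∧
    ∀ t ≥ t₀, HasDerivAt y (p t * y t + c t * (L t fun i => y (t - H i t)) + g t) t

/-- Antiderivative of `p` starting at `t₀`. -/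
def auxP (p : ℝ → ℝ) (t₀ : ℝ) : ℝ → ℝ := fun t => ∫ s in t₀..t, p s

/-- The right-hand side of the DDE without the `p·y` term, for a candidate `w`. -/
def auxR (m : ℕ) (H : Fin (m + 1) → ℝ → ℝ) (c g : ℝ → ℝ)
    (L : ℝ → (Fin (m + 1) → ℝ) → ℝ) (w : ℝ → ℝ) : ℝ → ℝ :=
  fun s => c s * L s (fun i => w (s - H i s)) + g s

/-- Integrand of the variation-of-constants formula. -/
def auxF (m : ℕ) (t₀ : ℝ) (H : Fin (m + 1) → ℝ → ℝ) (p c g : ℝ → ℝ)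
    (L : ℝ → (Fin (m + 1) → ℝ) → ℝ) (w : ℝ → ℝ) : ℝ → ℝ :=
  fun s => Real.exp (-(auxP p t₀ s)) * auxR m H c g L w s

/-- Picard-type operator with history `ψ`. -/
def auxT (m : ℕ) (t₀ : ℝ) (H : Fin (m + 1) → ℝ → ℝ) (p c g : ℝ → ℝ)
    (L : ℝ → (Fin (m + 1) → ℝ) → ℝ) (ψ : ℝ → ℝ) (w : ℝ → ℝ) : ℝ → ℝ :=
  fun t => if t ≤ t₀ then ψ t
    else Real.exp (auxP p t₀ t) * (ψ t₀ + ∫ s in t₀..t, auxF m t₀ H p c g L w s)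

theorem auxP_hasDerivAt {p : ℝ → ℝ} (hp : Continuous p) (t₀ t : ℝ) :
    HasDerivAt (auxP p t₀) (p t) t :=
  intervalIntegral.integral_hasDerivAt_right (hp.intervalIntegrable _ _)
    hp.aestronglyMeasurable.stronglyMeasurableAtFilter hp.continuousAt

theorem auxP_continuous {p : ℝ → ℝ} (hp : Continuous p) (t₀ : ℝ) :
    Continuous (auxP p t₀) :=
  intervalIntegral.continuous_primitive (fun a b => hp.intervalIntegrable a b) t₀

theorem auxP_zero (p : ℝ → ℝ) (t₀ : ℝ) : auxP p t₀ t₀ = 0 :=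
  intervalIntegral.integral_same

/-- Variation-of-constants representation for solutions of `y' = p y + R`. -/
theorem sol_integral {p R y : ℝ → ℝ} {t₀ : ℝ} (hp : Continuous p) (hR : Continuous R)
    (hy : ∀ t ≥ t₀, HasDerivAt y (p t * y t + R t) t) :
    ∀ t ≥ t₀, y t = Real.exp (auxP p t₀ t) *
      (y t₀ + ∫ s in t₀..t, Real.exp (-(auxP p t₀ s)) * R s) := by
  intro t ht
  set P := auxP p t₀ with hP
  have hderiv : ∀ x ∈ Set.uIcc t₀ t, HasDerivAt (fun s => Real.exp (-(P s)) * y s)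
      (Real.exp (-(P x)) * R x) x := by
    intro x hx
    rw [Set.uIcc_of_le ht] at hx
    have h1 : HasDerivAt (fun s => Real.exp (-(P s))) (Real.exp (-(P x)) * (-(p x))) x :=
      ((auxP_hasDerivAt hp t₀ x).neg).exp
    have h2 := hy x hx.1
    have := h1.fun_mul h2
    refine this.congr_deriv ?_
    ring
  have hint : IntervalIntegrable (fun s => Real.exp (-(P s)) * R s) MeasureTheory.volume t₀ t :=
    ((Real.continuous_exp.comp (auxP_continuous hp t₀).neg).mul hR).intervalIntegrable _ _
  have key := intervalIntegral.integral_eq_sub_of_hasDerivAt hderiv hint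
  have hPt₀ : P t₀ = 0 := auxP_zero p t₀
  rw [hPt₀] at key
  simp only [neg_zero, Real.exp_zero, one_mul] at key
  have hexp : Real.exp (P t) * Real.exp (-(P t)) = 1 := by
    rw [← Real.exp_add]; simp
  rw [key]
  have h2 : y t₀ + (Real.exp (-(P t)) * y t - y t₀) = Real.exp (-(P t)) * y t := by ring
  rw [h2, ← mul_assoc, hexp, one_mul]

theorem aux_comparison
    (m : ℕ) (t₀ hb : ℝ) (hhb : 0 < hb)
    (H : Fin (m + 1) → ℝ → ℝ) (hHcont : ∀ i, Continuous (H i))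
    (hHnonneg : ∀ i t, 0 ≤ H i t) (hHle : ∀ i t, H i t ≤ hb)
    (p c : ℝ → ℝ) (hp : Continuous p) (hc : Continuous c) (hc1 : ∀ t, 1 ≤ c t)
    (g : ℝ → ℝ) (hg : Continuous g) (hgnonneg : ∀ t, 0 ≤ g t)
    (L : ℝ → (Fin (m + 1) → ℝ) → ℝ)
    (hL : Continuous fun q : ℝ × (Fin (m + 1) → ℝ) => L q.1 q.2)
    (hLnonneg : ∀ t ζ, 0 ≤ L t ζ)
    (hLmono : ∀ t ζ ζ', (∀ i, ζ i ≤ ζ' i) → L t ζ ≤ L t ζ')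
    (huniq : ∀ ψ : ℝ → ℝ, Continuous ψ → (∀ s ∈ Set.Icc (t₀ - hb) t₀, 0 ≤ ψ s) →
      ∀ y₁ y₂ : ℝ → ℝ, IsScalarAuxSol m t₀ hb H p c g L ψ y₁ →
        IsScalarAuxSol m t₀ hb H p c g L ψ y₂ → ∀ t ≥ t₀, y₁ t = y₂ t)
    (ψ₁ ψ₂ y₁ y₂ : ℝ → ℝ) (hψ₁c : Continuous ψ₁) (hψ₂c : Continuous ψ₂)
    (hψ₁n : ∀ s ∈ Set.Icc (t₀ - hb) t₀, 0 ≤ ψ₁ s) (hψ₂n : ∀ s ∈ Set.Icc (t₀ - hb) t₀, 0 ≤ ψ₂ s)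
    (hsol₁ : IsScalarAuxSol m t₀ hb H p c g L ψ₁ y₁)
    (hsol₂ : IsScalarAuxSol m t₀ hb H p c g L ψ₂ y₂)
    (hψle : ∀ s ∈ Set.Icc (t₀ - hb) t₀, ψ₂ s ≤ ψ₁ s) :
    ∀ t ≥ t₀, y₂ t ≤ y₁ t := by
  obtain ⟨hy₁c, hy₁hist, hy₁d⟩ := hsol₁
  obtain ⟨hy₂c, hy₂hist, hy₂d⟩ := hsol₂
  set P : ℝ → ℝ := auxP p t₀ with hPdef
  have hPc : Continuous P := auxP_continuous hp t₀
  have hP0 : P t₀ = 0 := auxP_zero p t₀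
  set R : (ℝ → ℝ) → ℝ → ℝ := auxR m H c g L with hRdef
  set F : (ℝ → ℝ) → ℝ → ℝ := auxF m t₀ H p c g L with hFdef
  set T : (ℝ → ℝ) → ℝ → ℝ := auxT m t₀ H p c g L ψ₂ with hTdef
  -- basic facts about R and F
  have hRcont : ∀ w : ℝ → ℝ, Continuous w → Continuous (R w) := by
    intro w hw
    exact ((hc.mul (hL.comp (continuous_id.prodMk
      (continuous_pi fun i => hw.comp (continuous_id.sub (hHcont i)))))).add hg)
  have hFcont : ∀ w : ℝ → ℝ, Continuous w → Continuous (F w) := by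
    intro w hw
    exact (Real.continuous_exp.comp hPc.neg).mul (hRcont w hw)
  have hRnonneg : ∀ (w : ℝ → ℝ) (s : ℝ), 0 ≤ R w s := by
    intro w s
    have := hLnonneg s (fun i => w (s - H i s))
    have hcs : (0:ℝ) ≤ c s := le_trans zero_le_one (hc1 s)
    exact add_nonneg (mul_nonneg hcs this) (hgnonneg s)
  have hFnonneg : ∀ (w : ℝ → ℝ) (s : ℝ), 0 ≤ F w s :=
    fun w s => mul_nonneg (Real.exp_pos _).le (hRnonneg w s)
  have hRmono : ∀ w w' : ℝ → ℝ, ∀ s : ℝ, (∀ i, w (s - H i s) ≤ w' (s - H i s)) →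
      R w s ≤ R w' s := by
    intro w w' s hord
    have := hLmono s (fun i => w (s - H i s)) (fun i => w' (s - H i s)) hord
    have hcs : (0:ℝ) ≤ c s := le_trans zero_le_one (hc1 s)
    exact add_le_add_left (mul_le_mul_of_nonneg_left this hcs) _
  have hFmono : ∀ w w' : ℝ → ℝ, ∀ s : ℝ, (∀ i, w (s - H i s) ≤ w' (s - H i s)) →
      F w s ≤ F w' s :=
    fun w w' s hord => mul_le_mul_of_nonneg_left (hRmono w w' s hord) (Real.exp_pos _).le
  -- delayed arguments from `s ≥ t₀` land in `[t₀ - hb, s]`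
  have hdelay : ∀ (s : ℝ) (i : Fin (m + 1)), s - hb ≤ s - H i s ∧ s - H i s ≤ s := by
    intro s i
    constructor
    · linarith [hHle i s]
    · linarith [hHnonneg i s]
  -- integral representations of y₁, y₂
  have hint₁ : ∀ t ≥ t₀, y₁ t = Real.exp (P t) * (y₁ t₀ + ∫ s in t₀..t, F y₁ s) := by
    have := sol_integral hp (hRcont y₁ hy₁c) (fun t ht => by
      have h := hy₁d t ht
      convert h using 1
      simp only [hRdef, auxR]; ring)
    exact this
  have hint₂ : ∀ t ≥ t₀, y₂ t = Real.exp (P t) * (y₂ t₀ + ∫ s in t₀..t, F y₂ s) := by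
    have := sol_integral hp (hRcont y₂ hy₂c) (fun t ht => by
      have h := hy₂d t ht
      convert h using 1
      simp only [hRdef, auxR]; ring)
    exact this
  -- facts about the operator T
  have hTpast : ∀ (w : ℝ → ℝ) (t : ℝ), t ≤ t₀ → T w t = ψ₂ t := by
    intro w t ht
    simp only [hTdef, auxT, if_pos ht]
  have hTval : ∀ (w : ℝ → ℝ) (t : ℝ), t₀ ≤ t →
      T w t = Real.exp (P t) * (ψ₂ t₀ + ∫ s in t₀..t, F w s) := by
    intro w t ht
    rcases eq_or_lt_of_le ht with h | h
    · subst h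
      rw [hTpast w t₀ le_rfl]
      simp [hP0, intervalIntegral.integral_same]
    · simp only [hTdef, auxT, if_neg (not_le.mpr h)]
      rfl
  have hTcont : ∀ w : ℝ → ℝ, Continuous w → Continuous (T w) := by
    intro w hw
    have hform : Continuous fun t => Real.exp (P t) *
        (ψ₂ t₀ + ∫ s in t₀..t, F w s) :=
      (Real.continuous_exp.comp hPc).mul (continuous_const.add
        (intervalIntegral.continuous_primitive
          (fun a b => (hFcont w hw).intervalIntegrable a b) t₀))
    have : Continuous fun t => if t ≤ t₀ then ψ₂ t else Real.exp (P t) *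
        (ψ₂ t₀ + ∫ s in t₀..t, F w s) := by
      apply Continuous.if_le hψ₂c hform continuous_id continuous_const
      intro x hx
      simp only [id] at hx
      rw [hx]
      simp [hP0, intervalIntegral.integral_same]
    exact this
  have hTmono : ∀ w w' : ℝ → ℝ, Continuous w → Continuous w' →
      (∀ u, t₀ - hb ≤ u → w u ≤ w' u) → ∀ t, T w t ≤ T w' t := by
    intro w w' hw hw' hord t
    rcases le_or_gt t t₀ with ht | ht
    · rw [hTpast w t ht, hTpast w' t ht]
    · rw [hTval w t ht.le, hTval w' t ht.le]
      apply mul_le_mul_of_nonneg_left _ (Real.exp_pos _).le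
      apply add_le_add_right
      apply intervalIntegral.integral_mono_on ht.le
        ((hFcont w hw).intervalIntegrable _ _) ((hFcont w' hw').intervalIntegrable _ _)
      intro s hs
      apply hFmono
      intro i
      apply hord
      have := (hdelay s i).1
      have : s - hb ≤ s - H i s := (hdelay s i).1
      have hs1 : t₀ ≤ s := hs.1
      linarith
  -- the iteration sequence
  set v0 : ℝ → ℝ := fun t => min (y₁ t) (y₂ t) with hv0def
  have hv0c : Continuous v0 := hy₁c.min hy₂c
  set vs : ℕ → ℝ → ℝ := fun n => T^[n] v0 with hvsdef
  have hvs_succ : ∀ n, vs (n + 1) = T (vs n) := by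
    intro n
    simp only [hvsdef, Function.iterate_succ_apply']
  have hvscont : ∀ n, Continuous (vs n) := by
    intro n
    induction n with
    | zero => exact hv0c
    | succ k ih => rw [hvs_succ]; exact hTcont _ ih
  have hvpast : ∀ n t, t ≤ t₀ → vs (n + 1) t = ψ₂ t := by
    intro n t ht
    rw [hvs_succ]
    exact hTpast _ t ht
  -- v0 equals ψ₂ on the history interval
  have hv0hist : ∀ t ∈ Set.Icc (t₀ - hb) t₀, v0 t = ψ₂ t := by
    intro t ht
    simp only [hv0def]
    rw [hy₁hist t ht, hy₂hist t ht]
    exact min_eq_right (hψle t ht)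
  -- first step decreases on [t₀ - hb, ∞)
  have step0 : ∀ t, t₀ - hb ≤ t → vs 1 t ≤ vs 0 t := by
    intro t ht
    rcases le_or_gt t t₀ with ht' | ht'
    · rw [hvpast 0 t ht']
      have : vs 0 t = ψ₂ t := hv0hist t ⟨ht, ht'⟩
      rw [this]
    · have h1 : vs 1 t = Real.exp (P t) * (ψ₂ t₀ + ∫ s in t₀..t, F (vs 0) s) := by
        rw [hvs_succ]; exact hTval _ t ht'.le
      have ht₀mem : t₀ ∈ Set.Icc (t₀ - hb) t₀ := ⟨by linarith, le_rfl⟩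
      have hle2 : vs 1 t ≤ y₂ t := by
        rw [h1, hint₂ t ht'.le]
        apply mul_le_mul_of_nonneg_left _ (Real.exp_pos _).le
        apply add_le_add
        · rw [hy₂hist t₀ ht₀mem]
        · apply intervalIntegral.integral_mono_on ht'.le
            ((hFcont _ (hvscont 0)).intervalIntegrable _ _)
            ((hFcont _ hy₂c).intervalIntegrable _ _)
          intro s _
          exact hFmono _ _ s fun i => min_le_right _ _
      have hle1 : vs 1 t ≤ y₁ t := by
        rw [h1, hint₁ t ht'.le]
        apply mul_le_mul_of_nonneg_left _ (Real.exp_pos _).le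
        apply add_le_add
        · rw [hy₁hist t₀ ht₀mem]; exact hψle t₀ ht₀mem
        · apply intervalIntegral.integral_mono_on ht'.le
            ((hFcont _ (hvscont 0)).intervalIntegrable _ _)
            ((hFcont _ hy₁c).intervalIntegrable _ _)
          intro s _
          exact hFmono _ _ s fun i => min_le_left _ _
      exact le_min hle1 hle2
  -- the sequence (vs (n+1)) is pointwise antitone (globally)
  have hdecall : ∀ n t, vs (n + 1 + 1) t ≤ vs (n + 1) t := by
    intro n
    induction n with
    | zero =>
      intro t
      rw [hvs_succ 1]
      rw [show vs 1 = T (vs 0) from hvs_succ 0]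
      exact hTmono _ _ (hvscont 1) (hvscont 0) (fun u hu => step0 u hu) t
    | succ k ih =>
      intro t
      calc vs (k + 1 + 1 + 1) t = T (vs (k + 1 + 1)) t := congrFun (hvs_succ _) t
        _ ≤ T (vs (k + 1)) t := hTmono _ _ (hvscont (k + 1 + 1)) (hvscont (k + 1))
            (fun u _ => ih u) t
        _ = vs (k + 1 + 1) t := (congrFun (hvs_succ _) t).symm
  have hanti : ∀ t, Antitone fun n => vs (n + 1) t := by
    intro t
    apply antitone_nat_of_succ_le
    intro n
    exact hdecall n t
  -- nonnegativity for n ≥ 1 on [t₀ - hb, ∞)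
  have hnonneg : ∀ n t, t₀ - hb ≤ t → 0 ≤ vs (n + 1) t := by
    intro n t ht
    rcases le_or_gt t t₀ with ht' | ht'
    · rw [hvpast n t ht']
      exact hψ₂n t ⟨ht, ht'⟩
    · rw [hvs_succ, hTval _ t ht'.le]
      apply mul_nonneg (Real.exp_pos _).le
      apply add_nonneg (hψ₂n t₀ ⟨by linarith, le_rfl⟩)
      exact intervalIntegral.integral_nonneg ht'.le (fun u _ => hFnonneg _ u)
  -- boundedness below
  have hbdd : ∀ t, BddBelow (Set.range fun n => vs (n + 1) t) := by
    intro t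
    rcases le_or_gt t t₀ with ht | ht
    · refine ⟨ψ₂ t, ?_⟩
      rintro x ⟨n, rfl⟩
      exact (hvpast n t ht).ge
    · refine ⟨0, ?_⟩
      rintro x ⟨n, rfl⟩
      exact hnonneg n t (by linarith)
  -- the limit function
  set vinf : ℝ → ℝ := fun t => ⨅ n, vs (n + 1) t with hvinfdef
  have htend : ∀ t, Tendsto (fun n => vs (n + 1) t) atTop (𝓝 (vinf t)) :=
    fun t => tendsto_atTop_ciInf (hanti t) (hbdd t)
  have hinf_le : ∀ n t, vinf t ≤ vs (n + 1) t := fun n t => ciInf_le (hbdd t) n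
  have hinfpast : ∀ t, t ≤ t₀ → vinf t = ψ₂ t := by
    intro t ht
    have : (fun n => vs (n + 1) t) = fun _ => ψ₂ t := funext fun n => hvpast n t ht
    simp only [hvinfdef, this, ciInf_const]
  -- measurability of the limit
  have hvinf_meas : Measurable vinf :=
    measurable_of_tendsto_metrizable (fun n => (hvscont (n + 1)).measurable)
      (tendsto_pi_nhds.2 htend)
  have hFinf_meas : Measurable (F vinf) := by
    have h2 : Measurable fun s : ℝ => ((s, fun i => vinf (s - H i s)) : ℝ × (Fin (m + 1) → ℝ)) :=
      measurable_id.prodMk (measurable_pi_lambda _ fun i =>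
        hvinf_meas.comp (continuous_id.sub (hHcont i)).measurable)
    have h1 : Measurable fun s => L s (fun i => vinf (s - H i s)) :=
      hL.measurable.comp h2
    simp only [hFdef, auxF, auxR]
    exact ((Real.continuous_exp.comp hPc.neg).measurable).mul
      ((hc.measurable.mul h1).add hg.measurable)
  -- global domination of F vinf by F (vs 1)
  have hvinfle1 : ∀ t, vinf t ≤ vs 1 t := fun t => hinf_le 0 t
  have hFinf_bound : ∀ s, F vinf s ≤ F (vs 1) s :=
    fun s => hFmono _ _ s fun i => hvinfle1 _
  have hFinf_int : ∀ a b : ℝ, IntervalIntegrable (F vinf) MeasureTheory.volume a b := by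
    intro a b
    apply IntervalIntegrable.mono_fun' ((hFcont _ (hvscont 1)).intervalIntegrable a b)
      hFinf_meas.aestronglyMeasurable
    apply Filter.Eventually.of_forall
    intro s
    show ‖F vinf s‖ ≤ F (vs 1) s
    rw [Real.norm_eq_abs, abs_of_nonneg (hFnonneg vinf s)]
    exact hFinf_bound s
  -- fixed point property of the limit
  have hfix : ∀ t, t₀ ≤ t → vinf t = Real.exp (P t) * (ψ₂ t₀ + ∫ s in t₀..t, F vinf s) := by
    intro t ht
    -- the subsequence (vs (n+2) t) also tends to vinf t
    have htend2 : Tendsto (fun n => vs (n + 1 + 1) t) atTop (𝓝 (vinf t)) :=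
      (htend t).comp (tendsto_add_atTop_nat 1)
    -- convergence of the integrals by dominated convergence
    have hILim : Tendsto (fun n => ∫ s in t₀..t, F (vs (n + 1)) s) atTop
        (𝓝 (∫ s in t₀..t, F vinf s)) := by
      apply intervalIntegral.tendsto_integral_filter_of_dominated_convergence (F (vs 1))
      · exact Filter.Eventually.of_forall fun n =>
          (hFcont _ (hvscont (n + 1))).aestronglyMeasurable.restrict
      · apply Filter.Eventually.of_forall
        intro n
        apply Filter.Eventually.of_forall
        intro x _
        rw [Real.norm_eq_abs, abs_of_nonneg (hFnonneg _ x)]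
        exact hFmono _ _ x fun i => hanti _ (Nat.zero_le n)
      · exact (hFcont _ (hvscont 1)).intervalIntegrable _ _
      · apply Filter.Eventually.of_forall
        intro x _
        -- pointwise convergence of the integrand
        have hζ : Tendsto (fun n => fun i => vs (n + 1) (x - H i x)) atTop
            (𝓝 (fun i => vinf (x - H i x))) :=
          tendsto_pi_nhds.2 fun i => htend _
        have hLlim : Tendsto (fun n => L x (fun i => vs (n + 1) (x - H i x))) atTop
            (𝓝 (L x (fun i => vinf (x - H i x)))) := by
          have := (hL.tendsto (x, fun i => vinf (x - H i x))).comp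
            (tendsto_const_nhds.prodMk_nhds hζ)
          exact this
        have : Tendsto (fun n => Real.exp (-(P x)) *
            (c x * L x (fun i => vs (n + 1) (x - H i x)) + g x)) atTop
            (𝓝 (Real.exp (-(P x)) * (c x * L x (fun i => vinf (x - H i x)) + g x))) :=
          (((hLlim.const_mul (c x)).add_const (g x)).const_mul _)
        exact this
    have hTtend : Tendsto (fun n => vs (n + 1 + 1) t) atTop
        (𝓝 (Real.exp (P t) * (ψ₂ t₀ + ∫ s in t₀..t, F vinf s))) := by
      have heq : ∀ n : ℕ, vs (n + 1 + 1) t =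
          Real.exp (P t) * (ψ₂ t₀ + ∫ s in t₀..t, F (vs (n + 1)) s) := by
        intro n
        rw [hvs_succ]
        exact hTval _ t ht
      simp only [heq]
      exact ((hILim.const_add (ψ₂ t₀)).const_mul _)
    exact tendsto_nhds_unique htend2 hTtend
  -- continuity of the limit
  have hform_cont : Continuous fun t => Real.exp (P t) * (ψ₂ t₀ + ∫ s in t₀..t, F vinf s) :=
    (Real.continuous_exp.comp hPc).mul (continuous_const.add
      (intervalIntegral.continuous_primitive hFinf_int t₀))
  have hvinf_eq : vinf = fun t => if t ≤ t₀ then ψ₂ t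
      else Real.exp (P t) * (ψ₂ t₀ + ∫ s in t₀..t, F vinf s) := by
    funext t
    rcases le_or_gt t t₀ with ht | ht
    · rw [if_pos ht]; exact hinfpast t ht
    · rw [if_neg (not_le.mpr ht)]; exact hfix t ht.le
  have hvinfc : Continuous vinf := by
    rw [hvinf_eq]
    apply Continuous.if_le hψ₂c hform_cont continuous_id continuous_const
    intro x hx
    simp only [id] at hx
    rw [hx]
    simp [hP0, intervalIntegral.integral_same]
  have hFinfc : Continuous (F vinf) := hFcont vinf hvinfc
  -- derivative of the formula function
  have hφd : ∀ u : ℝ, HasDerivAt (fun t => Real.exp (P t) * (ψ₂ t₀ + ∫ s in t₀..t, F vinf s))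
      (Real.exp (P u) * p u * (ψ₂ t₀ + ∫ s in t₀..u, F vinf s)
        + Real.exp (P u) * F vinf u) u := by
    intro u
    have h1 : HasDerivAt (fun t => Real.exp (P t)) (Real.exp (P u) * p u) u :=
      (auxP_hasDerivAt hp t₀ u).exp
    have h2 : HasDerivAt (fun t => ψ₂ t₀ + ∫ s in t₀..t, F vinf s) (F vinf u) u := by
      apply HasDerivAt.const_add
      exact intervalIntegral.integral_hasDerivAt_right (hFinf_int t₀ u)
        hFinfc.aestronglyMeasurable.stronglyMeasurableAtFilter hFinfc.continuousAt
    have := h1.fun_mul h2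
    convert this using 1
  -- derivative of vinf for t ≥ t₀
  have hvinfd : ∀ t ≥ t₀, HasDerivAt vinf
      (p t * vinf t + c t * (L t fun i => vinf (t - H i t)) + g t) t := by
    intro t ht
    have hRval : Real.exp (P t) * F vinf t = c t * (L t fun i => vinf (t - H i t)) + g t := by
      simp only [hFdef, auxF, auxR, ← hPdef]
      rw [← mul_assoc, ← Real.exp_add]
      simp
    have hDval : Real.exp (P t) * p t * (ψ₂ t₀ + ∫ s in t₀..t, F vinf s)
        + Real.exp (P t) * F vinf t
        = p t * vinf t + c t * (L t fun i => vinf (t - H i t)) + g t := by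
      rw [hRval]
      have : Real.exp (P t) * p t * (ψ₂ t₀ + ∫ s in t₀..t, F vinf s) = p t * vinf t := by
        rw [hfix t ht]; ring
      rw [this]; ring
    rcases eq_or_lt_of_le ht with h | h
    · -- splice at t = t₀
      subst h
      have hright : HasDerivWithinAt vinf
          (p t₀ * vinf t₀ + c t₀ * (L t₀ fun i => vinf (t₀ - H i t₀)) + g t₀)
          (Set.Ici t₀) t₀ := by
        have := ((hφd t₀).hasDerivWithinAt (s := Set.Ici t₀)).congr
          (fun u hu => hfix u hu) (hfix t₀ le_rfl)
        rw [hDval] at this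
        exact this
      have hleft : HasDerivWithinAt vinf
          (p t₀ * vinf t₀ + c t₀ * (L t₀ fun i => vinf (t₀ - H i t₀)) + g t₀)
          (Set.Iic t₀) t₀ := by
        have heqset : ∀ u ∈ Set.Ioi (t₀ - hb) ∩ Set.Iic t₀, vinf u = y₂ u := by
          intro u hu
          rw [hinfpast u hu.2]
          exact (hy₂hist u ⟨hu.1.le, hu.2⟩).symm
        have hmem : Set.Ioi (t₀ - hb) ∩ Set.Iic t₀ ∈ 𝓝[Set.Iic t₀] t₀ :=
          Filter.inter_mem (nhdsWithin_le_nhds (Ioi_mem_nhds (by linarith)))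
            self_mem_nhdsWithin
        have heq : vinf =ᶠ[𝓝[Set.Iic t₀] t₀] y₂ :=
          Filter.eventuallyEq_of_mem hmem heqset
        have hD2 : p t₀ * y₂ t₀ + c t₀ * (L t₀ fun i => y₂ (t₀ - H i t₀)) + g t₀
            = p t₀ * vinf t₀ + c t₀ * (L t₀ fun i => vinf (t₀ - H i t₀)) + g t₀ := by
          have e1 : y₂ t₀ = vinf t₀ := by
            rw [hinfpast t₀ le_rfl]
            exact hy₂hist t₀ ⟨by linarith, le_rfl⟩
          have e2 : (fun i => y₂ (t₀ - H i t₀)) = fun i => vinf (t₀ - H i t₀) := by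
            funext i
            have h1 : t₀ - hb ≤ t₀ - H i t₀ := (hdelay t₀ i).1
            have h2 : t₀ - H i t₀ ≤ t₀ := (hdelay t₀ i).2
            rw [hinfpast _ h2, hy₂hist _ ⟨h1, h2⟩]
          rw [e1, e2]
        have := ((hy₂d t₀ le_rfl).hasDerivWithinAt (s := Set.Iic t₀)).congr_of_eventuallyEq
          heq (by rw [hinfpast t₀ le_rfl, hy₂hist t₀ ⟨by linarith, le_rfl⟩])
        rw [hD2] at this
        exact this
      have := hleft.union hright
      rw [Set.Iic_union_Ici] at this
      exact hasDerivWithinAt_univ.mp this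
    · -- interior point: vinf agrees with the formula near t
      have heq : vinf =ᶠ[𝓝 t] fun u => Real.exp (P u) * (ψ₂ t₀ + ∫ s in t₀..u, F vinf s) :=
        Filter.eventuallyEq_of_mem (Ioi_mem_nhds h) fun u hu => hfix u (le_of_lt hu)
      have := (hφd t).congr_of_eventuallyEq heq
      rw [hDval] at this
      exact this
  -- vinf is a solution with history ψ₂
  have hsolinf : IsScalarAuxSol m t₀ hb H p c g L ψ₂ vinf :=
    ⟨hvinfc, fun t ht => hinfpast t ht.2, hvinfd⟩
  have hsol₂' : IsScalarAuxSol m t₀ hb H p c g L ψ₂ y₂ := ⟨hy₂c, hy₂hist, hy₂d⟩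
  have hEq := huniq ψ₂ hψ₂c hψ₂n y₂ vinf hsol₂' hsolinf
  intro t ht
  calc y₂ t = vinf t := hEq t ht
    _ ≤ vs 1 t := hvinfle1 t
    _ ≤ vs 0 t := step0 t (by linarith)
    _ ≤ y₁ t := min_le_left _ _

/-- Lemma 1 (monotonicity in the history function): a larger history gives a larger
solution; in particular, for constant histories the solution is monotone
nondecreasing in the constant. -/
theorem lemma1_history_monotonicity
    (m : ℕ) (t₀ hb : ℝ) (hhb : 0 < hb)
    (H : Fin (m + 1) → ℝ → ℝ) (hHcont : ∀ i, Continuous (H i))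
    (hH0 : ∀ t, H 0 t = 0) (hHnonneg : ∀ i t, 0 ≤ H i t) (hHle : ∀ i t, H i t ≤ hb)
    (hlow : ℝ) (hhlow : 0 < hlow) (hHlow : ∀ i : Fin (m + 1), i ≠ 0 → ∀ t, hlow ≤ H i t)
    (p c : ℝ → ℝ) (hp : Continuous p) (hc : Continuous c) (hc1 : ∀ t, 1 ≤ c t)
    (g : ℝ → ℝ) (hg : Continuous g) (hgnonneg : ∀ t, 0 ≤ g t)
    (L : ℝ → (Fin (m + 1) → ℝ) → ℝ)
    (hL : Continuous fun q : ℝ × (Fin (m + 1) → ℝ) => L q.1 q.2)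
    (hL0 : ∀ t, L t 0 = 0)
    (hLnonneg : ∀ t ζ, 0 ≤ L t ζ)
    (hLmono : ∀ t ζ ζ', (∀ i, ζ i ≤ ζ' i) → L t ζ ≤ L t ζ')
    (huniq : ∀ ψ : ℝ → ℝ, Continuous ψ → (∀ s ∈ Set.Icc (t₀ - hb) t₀, 0 ≤ ψ s) →
      ∀ y₁ y₂ : ℝ → ℝ, IsScalarAuxSol m t₀ hb H p c g L ψ y₁ →
        IsScalarAuxSol m t₀ hb H p c g L ψ y₂ → ∀ t ≥ t₀, y₁ t = y₂ t) :
    (∀ ψ₁ ψ₂ y₁ y₂ : ℝ → ℝ, Continuous ψ₁ → Continuous ψ₂ →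
      (∀ s ∈ Set.Icc (t₀ - hb) t₀, 0 ≤ ψ₁ s) → (∀ s ∈ Set.Icc (t₀ - hb) t₀, 0 ≤ ψ₂ s) →
      IsScalarAuxSol m t₀ hb H p c g L ψ₁ y₁ → IsScalarAuxSol m t₀ hb H p c g L ψ₂ y₂ →
      (∀ s ∈ Set.Icc (t₀ - hb) t₀, ψ₂ s ≤ ψ₁ s) → ∀ t ≥ t₀, y₂ t ≤ y₁ t) ∧
    ∀ q₁ q₂ : ℝ, 0 ≤ q₂ → q₂ ≤ q₁ →
      ∀ z₁ z₂ : ℝ → ℝ, IsScalarAuxSol m t₀ hb H p c g L (fun _ => q₁) z₁ →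
        IsScalarAuxSol m t₀ hb H p c g L (fun _ => q₂) z₂ → ∀ t ≥ t₀, z₂ t ≤ z₁ t := by
  have main := aux_comparison m t₀ hb hhb H hHcont hHnonneg hHle p c hp hc hc1 g hg hgnonneg
    L hL hLnonneg hLmono huniq
  constructor
  · intro ψ₁ ψ₂ y₁ y₂ hψ₁c hψ₂c hψ₁n hψ₂n hsol₁ hsol₂ hle
    exact main ψ₁ ψ₂ y₁ y₂ hψ₁c hψ₂c hψ₁n hψ₂n hsol₁ hsol₂ hle
  · intro q₁ q₂ hq₂ hq z₁ z₂ hsol₁ hsol₂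
    exact main (fun _ => q₁) (fun _ => q₂) z₁ z₂ continuous_const continuous_const
      (fun s _ => le_trans hq₂ hq) (fun s _ => hq₂) hsol₁ hsol₂ (fun s _ => hq)
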